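/- Define Δ_{1/3}(τ, w₁, w₂) and Δ_{2/3}(τ, w₁, w₂) as Δ_b(τ,w₁,w₂) = Θ_b(3τ,(3/2)w₁)·Θ_0(τ, w₂+(1/2)w₁) + Θ_{b+1/2}(3τ,(3/2)w₁)·Θ_{1/2}(τ, w₂+(1/2)w₁). Then the sum Δ_{1/3}(τ,w₁,w₂) + Δ_{2/3}(τ,w₁,w₂) is symmetric in (w₁, w₂). -/

import Mathlib

set_option maxHeartbeats 1000000

open Complex

/-- One-variable Jacobi theta with characteristic a. -/
noncomputable def Theta1 (a : ℝ) (τ w : ℂ) : ℂ :=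
  ∑' m : ℤ, Complex.exp (2 * Real.pi * Complex.I * ((m : ℂ) + a)^2 * τ
    + 4 * Real.pi * Complex.I * ((m : ℂ) + a) * w)

/-- Δ_b(τ,w₁,w₂) = Θ_b(3τ,(3/2)w₁)Θ_0(τ,w₂+(1/2)w₁)
  + Θ_{b+1/2}(3τ,(3/2)w₁)Θ_{1/2}(τ,w₂+(1/2)w₁). -/
noncomputable def Delta (b : ℝ) (τ w1 w2 : ℂ) : ℂ :=
  Theta1 b (3*τ) ((3/2)*w1) * Theta1 0 τ (w2 + (1/2)*w1) +
  Theta1 (b + 1/2) (3*τ) ((3/2)*w1) * Theta1 (1/2) τ (w2 + (1/2)*w1)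

lemma sumth (a : ℝ) {τ : ℂ} (hτ : 0 < τ.im) (w : ℂ) :
    Summable (fun m : ℤ => ‖Complex.exp (2 * Real.pi * Complex.I * ((m : ℂ) + a)^2 * τ
      + 4 * Real.pi * Complex.I * ((m : ℂ) + a) * w)‖) := by
  rw [summable_norm_iff]
  have h : (fun m : ℤ => Complex.exp (2 * Real.pi * Complex.I * ((m : ℂ) + a)^2 * τ
      + 4 * Real.pi * Complex.I * ((m : ℂ) + a) * w)) =
      fun m : ℤ => Complex.exp (2 * Real.pi * Complex.I * (a:ℂ)^2 * τ
        + 4 * Real.pi * Complex.I * (a:ℂ) * w) *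
        jacobiTheta₂_term m (2*(a:ℂ)*τ + 2*w) (2*τ) := by
    funext m
    rw [jacobiTheta₂_term, ← Complex.exp_add]
    congr 1
    ring
  rw [h]
  apply Summable.mul_left
  refine (summable_jacobiTheta₂_term_iff _ _).mpr ?_
  simp [Complex.mul_im]
  linarith

/-- The symmetric lattice term. -/
noncomputable def Gf (τ w1 w2 : ℂ) (x : ℤ × ℤ) : ℂ :=
  Complex.exp (2 * Real.pi * Complex.I * τ *
      ((x.1:ℂ)^2 - (x.1:ℂ)*(x.2:ℂ) + (x.2:ℂ)^2)/3
    + 2 * Real.pi * Complex.I * ((x.1:ℂ) * w1 + (x.2:ℂ) * w2))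

lemma key (τ w1 w2 : ℂ) (hτ : 0 < τ.im) (b c : ℝ) (s t : ℤ)
    (hs : (s:ℂ) = 3*(b:ℂ) + (c:ℂ)) (ht : (t:ℂ) = 2*(c:ℂ)) :
    Summable (fun x : ℤ × ℤ => if (2*x.1 - x.2) % 6 = (2*s - t) % 6 then Gf τ w1 w2 x else 0) ∧
    Theta1 b (3*τ) ((3/2)*w1) * Theta1 c τ (w2 + (1/2)*w1) =
      ∑' x : ℤ × ℤ, (if (2*x.1 - x.2) % 6 = (2*s - t) % 6 then Gf τ w1 w2 x else 0) := by
  have hτ3 : 0 < (3*τ).im := by simp [Complex.mul_im]; linarith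
  have h1 := sumth b hτ3 ((3/2)*w1)
  have h2 := sumth c hτ (w2 + (1/2)*w1)
  set f : ℤ × ℤ → ℂ :=
    fun x => if (2*x.1 - x.2) % 6 = (2*s - t) % 6 then Gf τ w1 w2 x else 0 with hf
  set e : ℤ × ℤ → ℤ × ℤ := fun p => (3*p.1 + p.2 + s, 2*p.2 + t) with he
  have hinj : Function.Injective e := by
    intro p q h
    simp only [he, Prod.mk.injEq] at h
    obtain ⟨h1', h2'⟩ := h
    ext <;> omega
  have hsupp : Function.support f ⊆ Set.range e := by
    intro x hx
    simp only [hf, Function.mem_support] at hx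
    by_cases hcond : (2*x.1 - x.2) % 6 = (2*s - t) % 6
    · exact ⟨((x.1 - (x.2 - t)/2 - s)/3, (x.2 - t)/2), by
        simp only [he, Prod.ext_iff]; constructor <;> omega⟩
    · simp [hcond] at hx
  have hcomp : ∀ p : ℤ × ℤ,
      Complex.exp (2 * Real.pi * Complex.I * ((p.1 : ℂ) + b)^2 * (3*τ)
        + 4 * Real.pi * Complex.I * ((p.1 : ℂ) + b) * ((3/2)*w1)) *
      Complex.exp (2 * Real.pi * Complex.I * ((p.2 : ℂ) + c)^2 * τ
        + 4 * Real.pi * Complex.I * ((p.2 : ℂ) + c) * (w2 + (1/2)*w1)) = f (e p) := by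
    intro p
    have hc : (2*(3*p.1 + p.2 + s) - (2*p.2 + t)) % 6 = (2*s - t) % 6 := by omega
    simp only [hf, he, hc, if_pos, Gf, ← Complex.exp_add]
    congr 1
    push_cast
    rw [hs, ht]
    ring
  have hprod : Summable (fun p : ℤ × ℤ =>
      Complex.exp (2 * Real.pi * Complex.I * ((p.1 : ℂ) + b)^2 * (3*τ)
        + 4 * Real.pi * Complex.I * ((p.1 : ℂ) + b) * ((3/2)*w1)) *
      Complex.exp (2 * Real.pi * Complex.I * ((p.2 : ℂ) + c)^2 * τ
        + 4 * Real.pi * Complex.I * ((p.2 : ℂ) + c) * (w2 + (1/2)*w1))) :=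
    summable_mul_of_summable_norm (R := ℂ)
      (f := fun m : ℤ => Complex.exp (2 * Real.pi * Complex.I * ((m : ℂ) + b)^2 * (3*τ)
        + 4 * Real.pi * Complex.I * ((m : ℂ) + b) * ((3/2)*w1)))
      (g := fun m : ℤ => Complex.exp (2 * Real.pi * Complex.I * ((m : ℂ) + c)^2 * τ
        + 4 * Real.pi * Complex.I * ((m : ℂ) + c) * (w2 + (1/2)*w1))) h1 h2
  have hce : f ∘ e = fun p : ℤ × ℤ =>
      Complex.exp (2 * Real.pi * Complex.I * ((p.1 : ℂ) + b)^2 * (3*τ)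
        + 4 * Real.pi * Complex.I * ((p.1 : ℂ) + b) * ((3/2)*w1)) *
      Complex.exp (2 * Real.pi * Complex.I * ((p.2 : ℂ) + c)^2 * τ
        + 4 * Real.pi * Complex.I * ((p.2 : ℂ) + c) * (w2 + (1/2)*w1)) :=
    funext fun p => (hcomp p).symm
  have hsum : Summable f := by
    rw [← hinj.summable_iff (fun x hx => by_contra fun h => hx (hsupp h))]
    rw [hce]
    exact hprod
  refine ⟨hsum, ?_⟩
  rw [Theta1, Theta1, tsum_mul_tsum_of_summable_norm (R := ℂ)
      (f := fun m : ℤ => Complex.exp (2 * Real.pi * Complex.I * ((m : ℂ) + b)^2 * (3*τ)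
        + 4 * Real.pi * Complex.I * ((m : ℂ) + b) * ((3/2)*w1)))
      (g := fun m : ℤ => Complex.exp (2 * Real.pi * Complex.I * ((m : ℂ) + c)^2 * τ
        + 4 * Real.pi * Complex.I * ((m : ℂ) + c) * (w2 + (1/2)*w1))) h1 h2]
  rw [show (fun z : ℤ × ℤ =>
      Complex.exp (2 * Real.pi * Complex.I * ((z.1 : ℂ) + b)^2 * (3*τ)
        + 4 * Real.pi * Complex.I * ((z.1 : ℂ) + b) * ((3/2)*w1)) *
      Complex.exp (2 * Real.pi * Complex.I * ((z.2 : ℂ) + c)^2 * τ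
        + 4 * Real.pi * Complex.I * ((z.2 : ℂ) + c) * (w2 + (1/2)*w1))) = f ∘ e
    from hce.symm]
  exact hinj.tsum_eq hsupp

lemma main (τ w1 w2 : ℂ) (hτ : 0 < τ.im) :
    Delta (1/3) τ w1 w2 + Delta (2/3) τ w1 w2 =
      ∑' x : ℤ × ℤ, (if (2*x.1 - x.2) % 3 = 0 then 0 else Gf τ w1 w2 x) := by
  obtain ⟨S0, E0⟩ := key τ w1 w2 hτ (1/3) 0 1 0 (by push_cast; norm_num) (by norm_num)
  obtain ⟨S1, E1⟩ := key τ w1 w2 hτ (1/3 + 1/2) (1/2) 3 1 (by push_cast; norm_num) (by push_cast; norm_num)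
  obtain ⟨S2, E2⟩ := key τ w1 w2 hτ (2/3) 0 2 0 (by push_cast; norm_num) (by norm_num)
  obtain ⟨S3, E3⟩ := key τ w1 w2 hτ (2/3 + 1/2) (1/2) 4 1 (by push_cast; norm_num) (by push_cast; norm_num)
  rw [Delta, Delta, E0, E1, E2, E3]
  rw [add_add_add_comm, ← Summable.tsum_add S0 S2, ← Summable.tsum_add S1 S3, ← Summable.tsum_add (S0.add S2) (S1.add S3)]
  apply tsum_congr
  intro x
  split_ifs <;> first | ring1 | (exfalso; omega)

/-- Δ_{1/3} + Δ_{2/3} is symmetric in (w₁,w₂). -/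
theorem stmt14 (τ w1 w2 : ℂ) (hτ : 0 < τ.im) :
    Delta (1/3) τ w1 w2 + Delta (2/3) τ w1 w2 =
      Delta (1/3) τ w2 w1 + Delta (2/3) τ w2 w1 := by
  rw [main τ w1 w2 hτ, main τ w2 w1 hτ]
  rw [← (Equiv.prodComm ℤ ℤ).tsum_eq
    (fun x : ℤ × ℤ => if (2*x.1 - x.2) % 3 = 0 then 0 else Gf τ w2 w1 x)]
  apply tsum_congr
  intro x
  simp only [Equiv.prodComm_apply, Prod.fst_swap, Prod.snd_swap]
  split_ifs
  · exact (if_pos (show (2 * x.2 - x.1) % 3 = 0 from ‹_›)).symm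
  · exfalso; omega
  · exfalso; omega
  · refine Eq.trans ?_ (if_neg (show ¬(2 * x.2 - x.1) % 3 = 0 from ‹_›)).symm
    unfold Gf
    simp only [Prod.fst_swap, Prod.snd_swap]
    congr 1
    ring
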